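/- For all positive integers s and t, t·K'(s,t) ≤ A(s+1, t+2) − 3. -/

import Mathlib

/-- The Ackermann function of the paper, defined for positive integers `s, t`:
`A(1,t) = 2t`, `A(s,1) = 2`, and `A(s,t) = A(s-1, A(s,t-1))` for `s, t > 1`.
(The value at arguments equal to `0` is junk.) -/
def A : ℕ → ℕ → ℕ
  | 0, _ => 0
  | 1, t => 2 * t
  | _+2, 0 => 0
  | _+2, 1 => 2
  | s+2, t+2 => A (s+1) (A (s+2) (t+1))
termination_by s t => (s, t)

/-- The pair `(K(s,t), K'(s,t))` of auxiliary functions, defined for positive integers `s, t`: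
`K(1,t) = 2`, `K'(1,t) = 5`; `K(s,1) = 2^s`, `K'(s,1) = 2^s + 3`; and for `s, t > 1`,
`K(s,t) = K(s,t-1) * K(s-1, K'(s,t-1))` and
`K'(s,t) = K'(s,t-1) * K(s-1, K'(s,t-1)) + K'(s-1, K'(s,t-1))`.
(The value at arguments equal to `0` is junk.) -/
def KK : ℕ → ℕ → ℕ × ℕ
  | 0, _ => (0, 0)
  | 1, _ => (2, 5)
  | _+2, 0 => (0, 0)
  | s+2, 1 => (2^(s+2), 2^(s+2) + 3)
  | s+2, t+2 =>
    let p := KK (s+2) (t+1)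
    let q := KK (s+1) p.2
    (p.1 * q.1, p.2 * q.1 + q.2)
termination_by s t => (s, t)

/-- The function `K(s,t)`. -/
def K (s t : ℕ) : ℕ := (KK s t).1

/-- The function `K'(s,t)`. -/
def K' (s t : ℕ) : ℕ := (KK s t).2
lemma A_one (t : ℕ) : A 1 t = 2 * t := by rw [A]
lemma A_s1 (s : ℕ) : A (s+2) 1 = 2 := by rw [A]
lemma A_step (s t : ℕ) : A (s+2) (t+2) = A (s+1) (A (s+2) (t+1)) := by rw [A]
lemma K'_one (t : ℕ) : K' 1 t = 5 := by rw [K', KK]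
lemma K'_s1 (s : ℕ) : K' (s+2) 1 = 2^(s+2) + 3 := by rw [K', KK]
lemma K'_step (s t : ℕ) : K' (s+2) (t+2)
    = K' (s+2) (t+1) * K (s+1) (K' (s+2) (t+1)) + K' (s+1) (K' (s+2) (t+1)) := by
  rw [K', KK]; rfl
lemma K_one (t : ℕ) : K 1 t = 2 := by rw [K, KK]
lemma K_s1 (s : ℕ) : K (s+2) 1 = 2^(s+2) := by rw [K, KK]
lemma K_step (s t : ℕ) : K (s+2) (t+2)
    = K (s+2) (t+1) * K (s+1) (K' (s+2) (t+1)) := by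
  rw [K, KK]; rfl

lemma A_ge_two_mul : ∀ s t : ℕ, 2 * (t+1) ≤ A (s+1) (t+1) := by
  intro s
  induction s with
  | zero => intro t; rw [A_one]
  | succ s ih =>
    intro t
    induction t with
    | zero => show 2 * 1 ≤ A (s+2) 1; rw [A_s1]
    | succ t iht =>
      show 2 * (t+2) ≤ A (s+2) (t+2)
      have iht' : 2 * (t+1) ≤ A (s+2) (t+1) := iht
      rw [A_step]
      obtain ⟨y, hy⟩ : ∃ y, A (s+2) (t+1) = y + 1 :=
        ⟨A (s+2) (t+1) - 1, by omega⟩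
      rw [hy]
      have h1 := ih y
      omega

lemma A_double (s t : ℕ) : 2 * A (s+2) (t+1) ≤ A (s+2) (t+2) := by
  rw [A_step]
  obtain ⟨y, hy⟩ : ∃ y, A (s+2) (t+1) = y + 1 := ⟨A (s+2) (t+1) - 1, by
    have : 2 * (t+1) ≤ A (s+2) (t+1) := A_ge_two_mul (s+1) t; omega⟩
  rw [hy]; exact A_ge_two_mul s y

lemma A_shift (k s t : ℕ) : 2^k * A (s+2) (t+1) ≤ A (s+2) (t+k+1) := by
  induction k with
  | zero => simp
  | succ k ih =>
    show 2^(k+1) * A (s+2) (t+1) ≤ A (s+2) (t+k+2)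
    have h := A_double s (t+k)
    calc 2^(k+1) * A (s+2) (t+1) = 2 * (2^k * A (s+2) (t+1)) := by ring
    _ ≤ 2 * A (s+2) (t+k+1) := by omega
    _ ≤ A (s+2) (t+k+2) := h

lemma A_pow : ∀ s t : ℕ, 2^(t+1) ≤ A (s+2) (t+1) := by
  intro s t
  induction t with
  | zero => show 2^1 ≤ A (s+2) 1; rw [A_s1]; norm_num
  | succ t ih =>
    show 2^(t+2) ≤ A (s+2) (t+2)
    have ih' : 2^(t+1) ≤ A (s+2) (t+1) := ih
    have h := A_double s t
    calc 2^(t+2) = 2 * 2^(t+1) := by ring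
    _ ≤ 2 * A (s+2) (t+1) := by omega
    _ ≤ A (s+2) (t+2) := h

lemma A_s2 : ∀ s : ℕ, A (s+1) 2 = 4 := by
  intro s
  induction s with
  | zero => rw [A_one]
  | succ s ih =>
    show A (s+2) 2 = 4
    have ih' : A (s+1) 2 = 4 := ih
    have h : A (s+2) 2 = A (s+1) (A (s+2) 1) := A_step s 0
    rw [A_s1] at h
    rw [h, ih']

lemma A_four : ∀ s : ℕ, 2^(s+4) ≤ A (s+2) 4 := by
  intro s
  induction s with
  | zero =>
    show 2^4 ≤ A 2 4
    have h2 : A 2 2 = 4 := A_s2 1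
    have h3 : A 2 3 = A 1 (A 2 2) := A_step 0 1
    have h4 : A 2 4 = A 1 (A 2 3) := A_step 0 2
    rw [h2, A_one] at h3
    rw [h3, A_one] at h4
    rw [h4]; norm_num
  | succ s ih =>
    show 2^(s+5) ≤ A (s+3) 4
    have ih' : 2^(s+4) ≤ A (s+2) 4 := ih
    have h2 : A (s+3) 2 = 4 := A_s2 (s+2)
    have h3 : A (s+3) 3 = A (s+2) (A (s+3) 2) := A_step (s+1) 1
    have h4 : A (s+3) 4 = A (s+2) (A (s+3) 3) := A_step (s+1) 2
    rw [h2] at h3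
    rw [h3] at h4
    obtain ⟨y, hy⟩ : ∃ y, A (s+2) 4 = y + 1 := ⟨A (s+2) 4 - 1, by
      have : (1:ℕ) ≤ 2^(s+4) := Nat.one_le_two_pow
      omega⟩
    have hp : 2^(y+1) ≤ A (s+2) (y+1) := A_pow s y
    rw [h4, hy]
    calc 2^(s+5) ≤ 2^(y+1) := by
          apply Nat.pow_le_pow_right (by norm_num)
          have h5 : s + 4 < 2^(s+4) := Nat.lt_two_pow_self (n := s+4)
          omega
    _ ≤ A (s+2) (y+1) := hp

lemma K'_ge_five : ∀ s t : ℕ, 5 ≤ K' (s+1) (t+1) := by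
  intro s
  induction s with
  | zero => intro t; rw [K'_one]
  | succ s ih =>
    intro t
    induction t with
    | zero =>
      show 5 ≤ K' (s+2) 1
      rw [K'_s1]
      have : (4:ℕ) ≤ 2^(s+2) := by
        calc (4:ℕ) = 2^2 := rfl
        _ ≤ 2^(s+2) := Nat.pow_le_pow_right (by norm_num) (by omega)
      omega
    | succ t iht =>
      show 5 ≤ K' (s+2) (t+2)
      have iht' : 5 ≤ K' (s+2) (t+1) := iht
      rw [K'_step]
      obtain ⟨m, hm⟩ : ∃ m, K' (s+2) (t+1) = m + 1 := ⟨K' (s+2) (t+1) - 1, by omega⟩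
      rw [hm]
      have h := ih m
      omega

lemma K_le_K' : ∀ s t : ℕ, K (s+1) (t+1) ≤ K' (s+1) (t+1) := by
  intro s
  cases s with
  | zero => intro t; rw [K_one, K'_one]; omega
  | succ s =>
    intro t
    induction t with
    | zero => show K (s+2) 1 ≤ K' (s+2) 1; rw [K_s1, K'_s1]; omega
    | succ t iht =>
      show K (s+2) (t+2) ≤ K' (s+2) (t+2)
      have iht' : K (s+2) (t+1) ≤ K' (s+2) (t+1) := iht
      rw [K_step, K'_step]
      have h : K (s+2) (t+1) * K (s+1) (K' (s+2) (t+1))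
          ≤ K' (s+2) (t+1) * K (s+1) (K' (s+2) (t+1)) :=
        Nat.mul_le_mul_right _ iht'
      omega

lemma five_aux : ∀ t : ℕ, 5*t + 8 ≤ 2^(t+3) := by
  intro t
  induction t with
  | zero => norm_num
  | succ t ih =>
    show 5*(t+1) + 8 ≤ 2^(t+4)
    have hps : (2:ℕ)^(t+4) = 2^(t+3)*2 := pow_succ 2 (t+3)
    omega

lemma lin_pow : ∀ t : ℕ, 2*t + 5 ≤ 2^(t+3) := by
  intro t
  have := five_aux t
  omega

lemma main_ineq : ∀ s t : ℕ, (t+1) * K' (s+1) (t+1) + 3 ≤ A (s+2) (t+3) := by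
  intro s
  induction s with
  | zero =>
    intro t
    show (t+1) * K' 1 (t+1) + 3 ≤ A 2 (t+3)
    rw [K'_one]
    have h : 2^(t+3) ≤ A 2 (t+3) := A_pow 0 (t+2)
    have h2 := five_aux t
    omega
  | succ s ih =>
    intro t
    induction t with
    | zero =>
      show 1 * K' (s+2) 1 + 3 ≤ A (s+3) 3
      rw [K'_s1]
      have h2 : A (s+3) 2 = 4 := A_s2 (s+2)
      have h3 : A (s+3) 3 = A (s+2) (A (s+3) 2) := A_step (s+1) 1
      rw [h2] at h3
      have h4 := A_four s
      have h5 : (4:ℕ) ≤ 2^(s+2) := by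
        calc (4:ℕ) = 2^2 := rfl
        _ ≤ 2^(s+2) := Nat.pow_le_pow_right (by norm_num) (by omega)
      have h6 : (2:ℕ)^(s+4) = 4 * 2^(s+2) := by ring
      omega
    | succ t iht =>
      show (t+2) * K' (s+2) (t+2) + 3 ≤ A (s+3) (t+4)
      have hK5 : 5 ≤ K' (s+2) (t+1) := K'_ge_five (s+1) t
      obtain ⟨m, hm⟩ : ∃ m, K' (s+2) (t+1) = m + 1 :=
        ⟨K' (s+2) (t+1) - 1, by omega⟩
      have hm5 : 5 ≤ m + 1 := hm ▸ hK5
      have iht' : (t+1) * (m+1) + 3 ≤ A (s+3) (t+3) := by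
        rw [hm] at iht; exact iht
      set q := K (s+1) (m+1) with hq
      set r := K' (s+1) (m+1) with hr
      have hqr : q ≤ r := K_le_K' s m
      have hB : (m+1) * r + 3 ≤ A (s+2) (m+3) := ih m
      set B := A (s+2) (m+3) with hBdef
      have hK' : K' (s+2) (t+2) = (m+1) * q + r := by
        rw [K'_step, hm]
      set n := A (s+3) (t+3) with hn
      -- n ≥ m + t + 6
      have hnge : m + t + 6 ≤ n := by
        cases t with
        | zero =>
          -- n = A (s+3) 3 = A (s+2) 4, m+1 = 2^(s+2)+3
          have hm0 : m + 1 = 2^(s+2) + 3 := by rw [← hm]; exact K'_s1 s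
          have h2 : A (s+3) 2 = 4 := A_s2 (s+2)
          have h3 : A (s+3) 3 = A (s+2) (A (s+3) 2) := A_step (s+1) 1
          rw [h2] at h3
          have h4 := A_four s
          have h5 : (4:ℕ) ≤ 2^(s+2) := by
            calc (4:ℕ) = 2^2 := rfl
            _ ≤ 2^(s+2) := Nat.pow_le_pow_right (by norm_num) (by omega)
          have h6 : (2:ℕ)^(s+4) = 4 * 2^(s+2) := by ring
          have hn3 : n = A (s+2) 4 := by rw [hn]; exact h3
          omega
        | succ t' =>
          have iht'' : (t'+2) * (m+1) + 3 ≤ n := iht'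
          have expand : (t'+2) * (m+1) = (m+1) + (t'+1)*(m+1) := by ring
          have hmul : (t'+1) * 5 ≤ (t'+1) * (m+1) :=
            Nat.mul_le_mul_left (t'+1) hm5
          omega
      obtain ⟨k, hk1, hk2⟩ : ∃ k, n = m + 3 + k ∧ t + 3 ≤ k :=
        ⟨n - m - 3, by omega, by omega⟩
      have hsh : 2^k * B ≤ A (s+2) (m+2+k+1) := A_shift k s (m+2)
      have hidx : m+2+k+1 = m+3+k := by omega
      rw [hidx, ← hk1] at hsh
      have hstep : A (s+3) (t+4) = A (s+2) n := by
        rw [hn]; exact A_step (s+1) (t+2)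
      rw [hstep, hK']
      -- chain
      have hpow : (2:ℕ)^(t+3) ≤ 2^k := Nat.pow_le_pow_right (by norm_num) hk2
      have hlin := lin_pow t
      calc (t+2) * ((m+1) * q + r) + 3
          ≤ (t+2) * ((m+2) * r) + 3 := by
            have e1 : (m+1)*q + r ≤ (m+2)*r := by
              have h1 : (m+1)*q ≤ (m+1)*r := Nat.mul_le_mul_left _ hqr
              have h2 : (m+2)*r = (m+1)*r + r := by ring
              omega
            have := Nat.mul_le_mul_left (t+2) e1
            omega
        _ ≤ (t+2) * (2 * ((m+1) * r)) + 3 := by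
            have e2 : (m+2)*r ≤ 2*((m+1)*r) := by
              have h2 : 2*((m+1)*r) = (2*m+2)*r := by ring
              rw [h2]
              exact Nat.mul_le_mul_right r (by omega)
            have := Nat.mul_le_mul_left (t+2) e2
            omega
        _ = (2*t+4) * ((m+1)*r) + 3 := by ring
        _ ≤ (2*t+5) * ((m+1)*r + 3) := by
            have e3 : (2*t+5) * ((m+1)*r + 3) = (2*t+4)*((m+1)*r) + ((m+1)*r) + 6*t + 15 := by
              ring
            omega
        _ ≤ (2*t+5) * B := Nat.mul_le_mul_left _ hB
        _ ≤ 2^(t+3) * B := Nat.mul_le_mul_right _ hlin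
        _ ≤ 2^k * B := Nat.mul_le_mul_right _ hpow
        _ ≤ A (s+2) n := hsh

/-- For all positive integers `s` and `t`, `t * K'(s,t) ≤ A(s+1, t+2) - 3`. -/
theorem mul_K'_le_ackermann_sub_three (s t : ℕ) (hs : 0 < s) (ht : 0 < t) :
    t * K' s t ≤ A (s + 1) (t + 2) - 3 := by
  obtain ⟨s', rfl⟩ : ∃ s', s = s' + 1 := ⟨s - 1, by omega⟩
  obtain ⟨t', rfl⟩ : ∃ t', t = t' + 1 := ⟨t - 1, by omega⟩
  have h := main_ineq s' t'
  have he : A (s' + 1 + 1) (t' + 1 + 2) = A (s' + 2) (t' + 3) := rfl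
  rw [he]
  omega
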